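/- Beale–Kato–Majda-type logarithmic estimate for the singular part of the Biot–Savart kernel (Lemma 4.3, labeled Le46): Let H : ℝ²\{0} → ℝ² be H(y) := (−y₂, y₁)/(2π|y|²) and let ∇H denote its (2×2 matrix-valued) derivative, so that |∇H(y)| ≤ 4|y|^{−2}. For every γ ∈ (0,1] there is a constant C = C(γ) > 0 with the following property: for every bounded measurable w : ℝ² → ℝ with finite Hölder seminorm [w]_γ := sup_{x≠y} |w(x) − w(y)|/|x−y|^γ, setting δ := (1 + [w]_γ)^{−1}, one has for every x ∈ ℝ², | ∫_{|y|≤δ} ∇H(y) (w(x−y) − w(x)) dy + ∫_{δ<|y|≤π} ∇H(y) w(x−y) dy | ≤ C ( 1 + ‖w‖_∞ (1 + log(1 + [w]_γ)) ). (Both integrals converge absolutely: the first since |∇H(y)||w(x−y)−w(x)| ≤ 4[w]_γ |y|^{γ−2}, the second since ∇H is bounded on {δ < |y| ≤ π}.) -/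

import Mathlib

open MeasureTheory
open scoped ENNReal

noncomputable section

/-- The singular part of the Biot–Savart kernel:
`H(y) = (−y₂, y₁) / (2π|y|²)`. -/
def biotSavartH (y : EuclideanSpace ℝ (Fin 2)) : EuclideanSpace ℝ (Fin 2) :=
  (2 * Real.pi * ‖y‖ ^ 2)⁻¹ • (EuclideanSpace.equiv (Fin 2) ℝ).symm ![-(y 1), y 0]

namespace BKMAux

open Metric Set

abbrev E2 := EuclideanSpace ℝ (Fin 2)

/-- The rotation `y ↦ (-y₂, y₁)` as a continuous linear map. -/
def rotCLM : E2 →L[ℝ] E2 :=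
  LinearMap.toContinuousLinearMap
    { toFun := fun y => (EuclideanSpace.equiv (Fin 2) ℝ).symm ![-(y 1), y 0]
      map_add' := by
        intro a b
        apply (EuclideanSpace.equiv (Fin 2) ℝ).injective
        ext i
        fin_cases i <;> simp <;> ring
      map_smul' := by
        intro c a
        apply (EuclideanSpace.equiv (Fin 2) ℝ).injective
        ext i
        fin_cases i <;> simp <;> ring }

lemma rotCLM_apply (y : E2) :
    rotCLM y = (EuclideanSpace.equiv (Fin 2) ℝ).symm ![-(y 1), y 0] := rfl

lemma norm_rotCLM (y : E2) : ‖rotCLM y‖ = ‖y‖ := by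
  rw [rotCLM_apply, EuclideanSpace.norm_eq, EuclideanSpace.norm_eq]
  congr 1
  simp [Fin.sum_univ_two]
  ring

lemma norm_rotCLM_op : ‖rotCLM‖ ≤ 1 :=
  ContinuousLinearMap.opNorm_le_bound _ zero_le_one
    (fun y => by rw [norm_rotCLM, one_mul])

lemma biotSavartH_eq :
    biotSavartH = fun y : E2 =>
      ((fun t : ℝ => (2 * Real.pi)⁻¹ * t⁻¹) ∘ fun y : E2 => ‖y‖ ^ 2) y • rotCLM y := by
  funext y
  show (2 * Real.pi * ‖y‖ ^ 2)⁻¹ • _ = ((2 * Real.pi)⁻¹ * (‖y‖ ^ 2)⁻¹) • rotCLM y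
  rw [mul_inv, rotCLM_apply]

lemma hasFDerivAt_biotSavartH (y : E2) (hy : y ≠ 0) :
    HasFDerivAt biotSavartH
      (((2 * Real.pi)⁻¹ * (‖y‖ ^ 2)⁻¹) • rotCLM +
        (((2 * Real.pi)⁻¹ * -((‖y‖ ^ 2) ^ 2)⁻¹) • (2 • (innerSL ℝ y))).smulRight
          (rotCLM y)) y := by
  have hns : (‖y‖ ^ 2 : ℝ) ≠ 0 := by
    have : ‖y‖ ≠ 0 := norm_ne_zero_iff.mpr hy
    positivity
  have hn : HasFDerivAt (fun y : E2 => ‖y‖ ^ 2) (2 • (innerSL ℝ y)) y :=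
    (hasStrictFDerivAt_norm_sq y).hasFDerivAt
  have hφ : HasDerivAt (fun t : ℝ => (2 * Real.pi)⁻¹ * t⁻¹)
      ((2 * Real.pi)⁻¹ * -((‖y‖ ^ 2) ^ 2)⁻¹) (‖y‖ ^ 2) :=
    (hasDerivAt_inv hns).const_mul ((2 * Real.pi)⁻¹)
  have hc := hφ.comp_hasFDerivAt y hn
  have h := hc.smul rotCLM.hasFDerivAt
  rw [biotSavartH_eq]
  exact h

lemma norm_fderiv_biotSavartH (y : E2) (hy : y ≠ 0) :
    ‖fderiv ℝ biotSavartH y‖ ≤ (‖y‖ ^ 2)⁻¹ := by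
  rw [(hasFDerivAt_biotSavartH y hy).fderiv]
  have hN : (0:ℝ) < ‖y‖ := norm_pos_iff.mpr hy
  have hπ : (0:ℝ) < Real.pi := Real.pi_pos
  set N := ‖y‖ with hNdef
  have h2inner : ‖(2 • (innerSL ℝ y) : E2 →L[ℝ] ℝ)‖ ≤ 2 * N := by
    rw [two_smul]
    calc ‖(innerSL ℝ y : E2 →L[ℝ] ℝ) + innerSL ℝ y‖
        ≤ ‖(innerSL ℝ y : E2 →L[ℝ] ℝ)‖ + ‖(innerSL ℝ y : E2 →L[ℝ] ℝ)‖ := norm_add_le _ _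
      _ = 2 * N := by rw [innerSL_apply_norm]; ring
  have hA : ‖((2 * Real.pi)⁻¹ * (N ^ 2)⁻¹) • rotCLM‖ ≤ (2 * Real.pi)⁻¹ * (N ^ 2)⁻¹ := by
    refine (norm_smul_le ((2 * Real.pi)⁻¹ * (N ^ 2)⁻¹) rotCLM).trans ?_
    rw [Real.norm_eq_abs, abs_of_nonneg (by positivity)]
    calc (2 * Real.pi)⁻¹ * (N ^ 2)⁻¹ * ‖rotCLM‖
        ≤ (2 * Real.pi)⁻¹ * (N ^ 2)⁻¹ * 1 := by
          gcongr
          exact norm_rotCLM_op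
      _ = (2 * Real.pi)⁻¹ * (N ^ 2)⁻¹ := mul_one _
  have hB : ‖((((2 * Real.pi)⁻¹ * -((N ^ 2) ^ 2)⁻¹) • (2 • (innerSL ℝ y))).smulRight
        (rotCLM y))‖ ≤ (2 * Real.pi)⁻¹ * ((N ^ 2) ^ 2)⁻¹ * (2 * N) * N := by
    rw [ContinuousLinearMap.norm_smulRight_apply, norm_rotCLM]
    have hd : ‖((2 * Real.pi)⁻¹ * -((N ^ 2) ^ 2)⁻¹) • (2 • (innerSL ℝ y) : E2 →L[ℝ] ℝ)‖
        ≤ (2 * Real.pi)⁻¹ * ((N ^ 2) ^ 2)⁻¹ * (2 * N) := by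
      refine (norm_smul_le ((2 * Real.pi)⁻¹ * -((N ^ 2) ^ 2)⁻¹)
        (2 • (innerSL ℝ y) : E2 →L[ℝ] ℝ)).trans ?_
      rw [Real.norm_eq_abs, abs_mul, abs_neg,
        abs_of_nonneg (by positivity : (0:ℝ) ≤ (2 * Real.pi)⁻¹),
        abs_of_nonneg (by positivity : (0:ℝ) ≤ ((N ^ 2) ^ 2)⁻¹)]
      exact mul_le_mul_of_nonneg_left h2inner (by positivity)
    exact mul_le_mul_of_nonneg_right hd hN.le
  refine (norm_add_le _ _).trans ((add_le_add hA hB).trans ?_)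
  have key : (2 * Real.pi)⁻¹ * ((N ^ 2) ^ 2)⁻¹ * (2 * N) * N = Real.pi⁻¹ * (N ^ 2)⁻¹ := by
    field_simp
  rw [key]
  have h3 : (3:ℝ) ≤ Real.pi := by linarith [Real.pi_gt_three]
  have e1 : (2 * Real.pi)⁻¹ * (N ^ 2)⁻¹ + Real.pi⁻¹ * (N ^ 2)⁻¹
      = ((2 * Real.pi)⁻¹ + Real.pi⁻¹) * (N ^ 2)⁻¹ := by ring
  rw [e1]
  have h4 : (2 * Real.pi)⁻¹ + Real.pi⁻¹ ≤ 1 := by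
    have i1 : (2 * Real.pi)⁻¹ ≤ 6⁻¹ := by
      apply inv_anti₀ <;> linarith
    have i2 : Real.pi⁻¹ ≤ 3⁻¹ := by
      apply inv_anti₀ <;> linarith
    calc (2 * Real.pi)⁻¹ + Real.pi⁻¹ ≤ 6⁻¹ + 3⁻¹ := add_le_add i1 i2
      _ ≤ 1 := by norm_num
  calc ((2 * Real.pi)⁻¹ + Real.pi⁻¹) * (N ^ 2)⁻¹ ≤ 1 * (N ^ 2)⁻¹ := by gcongr
    _ = (N ^ 2)⁻¹ := one_mul _

/-! ### Measure-theoretic estimates -/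

lemma volume_closedBall_E2 (R : ℝ) :
    volume (closedBall (0:E2) R) = ENNReal.ofReal R ^ 2 * ENNReal.ofReal Real.pi := by
  rw [EuclideanSpace.volume_closedBall]
  norm_num [Real.sq_sqrt Real.pi_pos.le, Real.Gamma_two]

lemma piece (s : Set E2) (hs : MeasurableSet s) (R c : ℝ) (hR : 0 ≤ R) (hc : 0 ≤ c)
    (hsub : s ⊆ closedBall (0:E2) R) (f : E2 → ℝ) (hf : ∀ y ∈ s, f y ≤ c) :
    ∫⁻ y in s, ENNReal.ofReal (f y) ≤ ENNReal.ofReal (c * R ^ 2 * Real.pi) := by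
  calc ∫⁻ y in s, ENNReal.ofReal (f y)
      ≤ ∫⁻ _ in s, ENNReal.ofReal c :=
        setLIntegral_mono' hs (fun y hy => ENNReal.ofReal_le_ofReal (hf y hy))
    _ = ENNReal.ofReal c * volume s := by rw [setLIntegral_const]
    _ ≤ ENNReal.ofReal c * volume (closedBall (0:E2) R) :=
        mul_le_mul_right (measure_mono hsub) _
    _ = ENNReal.ofReal (c * R ^ 2 * Real.pi) := by
        rw [volume_closedBall_E2, ← ENNReal.ofReal_pow hR, ← mul_assoc,
          ← ENNReal.ofReal_mul hc, ← ENNReal.ofReal_mul (by positivity)]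

lemma annulus_measurable (c d : ℝ) :
    MeasurableSet {y : E2 | c ≤ ‖y‖ ∧ ‖y‖ ≤ d} := by
  have h : {y : E2 | c ≤ ‖y‖ ∧ ‖y‖ ≤ d} = (fun y : E2 => ‖y‖) ⁻¹' (Set.Icc c d) := rfl
  rw [h]
  exact measurable_norm measurableSet_Icc

lemma annulus_measurable' (c d : ℝ) :
    MeasurableSet {y : E2 | c < ‖y‖ ∧ ‖y‖ ≤ d} := by
  have h : {y : E2 | c < ‖y‖ ∧ ‖y‖ ≤ d} = (fun y : E2 => ‖y‖) ⁻¹' (Set.Ioc c d) := rfl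
  rw [h]
  exact measurable_norm measurableSet_Ioc

lemma dyadic_mem {t : ℝ} (ht : 1 ≤ t) :
    ∃ k : ℕ, (2:ℝ) ^ (k:ℝ) ≤ t ∧ t ≤ 2 ^ ((k:ℝ) + 1) ∧ (k:ℝ) ≤ Real.logb 2 t := by
  have ht0 : 0 < t := lt_of_lt_of_le one_pos ht
  have hlb : 0 ≤ Real.logb 2 t := Real.logb_nonneg one_lt_two ht
  have h1 : (⌊Real.logb 2 t⌋₊ : ℝ) ≤ Real.logb 2 t := Nat.floor_le hlb
  have h2 : Real.logb 2 t < ⌊Real.logb 2 t⌋₊ + 1 := Nat.lt_floor_add_one _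
  refine ⟨⌊Real.logb 2 t⌋₊, ?_, ?_, h1⟩
  · calc (2:ℝ) ^ ((⌊Real.logb 2 t⌋₊ : ℕ) : ℝ) ≤ 2 ^ (Real.logb 2 t) :=
        Real.rpow_le_rpow_of_exponent_le one_le_two h1
      _ = t := Real.rpow_logb two_pos (by norm_num) ht0
  · calc t = 2 ^ (Real.logb 2 t) := (Real.rpow_logb two_pos (by norm_num) ht0).symm
      _ ≤ 2 ^ ((⌊Real.logb 2 t⌋₊ : ℝ) + 1) :=
        Real.rpow_le_rpow_of_exponent_le one_le_two h2.le

/-- Dyadic estimate on an annulus for `‖y‖⁻²`. -/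
lemma ann_lintegral (a b : ℝ) (ha : 0 < a) (hab : a ≤ b) :
    ∫⁻ y in {y : E2 | a < ‖y‖ ∧ ‖y‖ ≤ b}, ENNReal.ofReal ((‖y‖ ^ 2)⁻¹)
      ≤ ENNReal.ofReal (4 * Real.pi * (Real.logb 2 (b / a) + 1)) := by
  set n : ℕ := ⌊Real.logb 2 (b / a)⌋₊ + 1 with hn
  set A : ℕ → Set E2 := fun k =>
    if k < n then {y : E2 | a * 2 ^ (k:ℝ) ≤ ‖y‖ ∧ ‖y‖ ≤ a * 2 ^ ((k:ℝ) + 1)} else ∅ with hA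
  have hba1 : 1 ≤ b / a := (one_le_div ha).mpr hab
  have hlbba : 0 ≤ Real.logb 2 (b / a) := Real.logb_nonneg one_lt_two hba1
  have hsub : {y : E2 | a < ‖y‖ ∧ ‖y‖ ≤ b} ⊆ ⋃ k, A k := by
    rintro y ⟨h1, h2⟩
    have hya : 1 ≤ ‖y‖ / a := le_of_lt ((one_lt_div ha).mpr h1)
    obtain ⟨k, hk1, hk2, hk3⟩ := dyadic_mem hya
    have hmono : Real.logb 2 (‖y‖ / a) ≤ Real.logb 2 (b / a) :=
      Real.logb_le_logb_of_le one_lt_two (by positivity) (by gcongr)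
    have hkn : k < n := by
      have hcast : (k:ℝ) < (n:ℝ) := by
        have hne : (n:ℝ) = (⌊Real.logb 2 (b / a)⌋₊ : ℝ) + 1 := by rw [hn]; push_cast; ring
        have h4 := Nat.lt_floor_add_one (Real.logb 2 (b / a))
        rw [hne]
        linarith [hk3.trans hmono]
      exact_mod_cast hcast
    refine Set.mem_iUnion.mpr ⟨k, ?_⟩
    rw [hA]
    simp only [if_pos hkn]
    refine ⟨?_, ?_⟩
    · have h5 := (le_div_iff₀ ha).mp hk1
      linarith
    · have h6 := (div_le_iff₀ ha).mp hk2
      linarith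
  calc ∫⁻ y in {y : E2 | a < ‖y‖ ∧ ‖y‖ ≤ b}, ENNReal.ofReal ((‖y‖ ^ 2)⁻¹)
      ≤ ∫⁻ y in ⋃ k, A k, ENNReal.ofReal ((‖y‖ ^ 2)⁻¹) := lintegral_mono_set hsub
    _ ≤ ∑' k, ∫⁻ y in A k, ENNReal.ofReal ((‖y‖ ^ 2)⁻¹) := lintegral_iUnion_le _ _
    _ ≤ ∑' k, (if k < n then ENNReal.ofReal (4 * Real.pi) else 0) := by
        apply ENNReal.tsum_le_tsum
        intro k
        by_cases hk : k < n
        · rw [hA]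
          simp only [if_pos hk]
          have hp : (0:ℝ) < (2:ℝ) ^ (k:ℝ) := by positivity
          have hp1 : (0:ℝ) < (2:ℝ) ^ ((k:ℝ) + 1) := by positivity
          refine le_trans (piece _ (annulus_measurable _ _) (a * 2 ^ ((k:ℝ) + 1))
            (((a * 2 ^ (k:ℝ)) ^ 2)⁻¹) (by positivity) (by positivity) ?_ _ ?_) ?_
          · intro y hy
            rw [mem_closedBall_zero_iff]
            exact hy.2
          · intro y hy
            apply inv_anti₀ (by positivity)
            exact pow_le_pow_left₀ (by positivity) hy.1 2
          · apply ENNReal.ofReal_le_ofReal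
            have he : (2:ℝ) ^ ((k:ℝ) + 1) = 2 ^ (k:ℝ) * 2 := Real.rpow_add_one (by norm_num) _
            rw [he]
            have heq : ((a * 2 ^ (k:ℝ)) ^ 2)⁻¹ * (a * (2 ^ (k:ℝ) * 2)) ^ 2 * Real.pi
                = 4 * Real.pi := by
              field_simp
              ring
            rw [heq]
        · rw [hA]
          simp [if_neg hk]
    _ = ∑ k ∈ Finset.range n, (if k < n then ENNReal.ofReal (4 * Real.pi) else 0) := by
        refine tsum_eq_sum ?_
        intro k hk
        rw [if_neg (by simpa using hk)]
    _ = ∑ _k ∈ Finset.range n, ENNReal.ofReal (4 * Real.pi) := by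
        refine Finset.sum_congr rfl ?_
        intro k hk
        rw [if_pos (Finset.mem_range.mp hk)]
    _ = (n:ℝ≥0∞) * ENNReal.ofReal (4 * Real.pi) := by
        rw [Finset.sum_const, Finset.card_range, nsmul_eq_mul]
    _ ≤ ENNReal.ofReal (4 * Real.pi * (Real.logb 2 (b / a) + 1)) := by
        rw [← ENNReal.ofReal_natCast n, ← ENNReal.ofReal_mul (by positivity)]
        apply ENNReal.ofReal_le_ofReal
        have hnle : (n:ℝ) ≤ Real.logb 2 (b / a) + 1 := by
          rw [hn]
          push_cast
          linarith [Nat.floor_le hlbba]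
        calc (n:ℝ) * (4 * Real.pi) ≤ (Real.logb 2 (b / a) + 1) * (4 * Real.pi) := by
              have : (0:ℝ) ≤ 4 * Real.pi := by positivity
              exact mul_le_mul_of_nonneg_right hnle this
          _ = 4 * Real.pi * (Real.logb 2 (b / a) + 1) := by ring

/-- Dyadic estimate on a ball for `‖y‖^(γ-2)`. -/
lemma ball_lintegral (γ : ℝ) (hγ0 : 0 < γ) (hγ2 : γ ≤ 2) (ρ : ℝ) (hρ : 0 < ρ) :
    ∫⁻ y in closedBall (0:E2) ρ, ENNReal.ofReal (‖y‖ ^ (γ - 2))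
      ≤ ENNReal.ofReal (4 * Real.pi * ρ ^ γ * (1 - (2:ℝ) ^ (-γ))⁻¹) := by
  set q : ℝ := (2:ℝ) ^ (-γ) with hqdef
  have hq0 : 0 < q := Real.rpow_pos_of_pos two_pos _
  have hq1 : q < 1 := Real.rpow_lt_one_of_one_lt_of_neg one_lt_two (by linarith)
  set A : ℕ → Set E2 := fun k =>
    {y : E2 | ρ * ((2:ℝ) ^ ((k:ℝ) + 1))⁻¹ ≤ ‖y‖ ∧ ‖y‖ ≤ ρ * ((2:ℝ) ^ (k:ℝ))⁻¹} with hA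
  have hsub : closedBall (0:E2) ρ ⊆ {(0:E2)} ∪ ⋃ k, A k := by
    intro y hy
    rw [mem_closedBall_zero_iff] at hy
    by_cases h0 : y = 0
    · exact Or.inl (by simp [h0])
    · right
      have hN : 0 < ‖y‖ := norm_pos_iff.mpr h0
      have ht : 1 ≤ ρ / ‖y‖ := (one_le_div hN).mpr hy
      obtain ⟨k, hk1, hk2, -⟩ := dyadic_mem ht
      have hp : (0:ℝ) < (2:ℝ) ^ (k:ℝ) := by positivity
      have hp1 : (0:ℝ) < (2:ℝ) ^ ((k:ℝ) + 1) := by positivity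
      refine Set.mem_iUnion.mpr ⟨k, ?_, ?_⟩
      · rw [← div_eq_mul_inv, div_le_iff₀ hp1]
        have h5 := (div_le_iff₀ hN).mp hk2
        linarith
      · rw [← div_eq_mul_inv, le_div_iff₀ hp]
        have h6 := (le_div_iff₀ hN).mp hk1
        linarith
  have hterm : ∀ k : ℕ, ∫⁻ y in A k, ENNReal.ofReal (‖y‖ ^ (γ - 2))
      ≤ ENNReal.ofReal (4 * Real.pi * ρ ^ γ) * (ENNReal.ofReal q) ^ k := by
    intro k
    have hp : (0:ℝ) < (2:ℝ) ^ (k:ℝ) := by positivity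
    have hp1 : (0:ℝ) < (2:ℝ) ^ ((k:ℝ) + 1) := by positivity
    set u : ℝ := ρ * ((2:ℝ) ^ ((k:ℝ) + 1))⁻¹ with hu
    have hu0 : 0 < u := by positivity
    have hRu : ρ * ((2:ℝ) ^ (k:ℝ))⁻¹ = 2 * u := by
      rw [hu, Real.rpow_add_one (by norm_num : (2:ℝ) ≠ 0)]
      field_simp
    have hcRπ : u ^ (γ - 2) * (ρ * ((2:ℝ) ^ (k:ℝ))⁻¹) ^ 2 * Real.pi
        ≤ 4 * Real.pi * ρ ^ γ * q ^ k := by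
      rw [hRu]
      have h2 : u ^ (γ - 2) * u ^ (2:ℕ) = u ^ γ := by
        rw [← Real.rpow_natCast u 2, ← Real.rpow_add hu0]
        norm_num
      have huγ : u ^ γ ≤ ρ ^ γ * q ^ k := by
        have hule : u ≤ ρ * ((2:ℝ) ^ (k:ℝ))⁻¹ := by rw [hRu]; linarith
        calc u ^ γ ≤ (ρ * ((2:ℝ) ^ (k:ℝ))⁻¹) ^ γ :=
              Real.rpow_le_rpow hu0.le hule hγ0.le
          _ = ρ ^ γ * (((2:ℝ) ^ (k:ℝ))⁻¹) ^ γ := Real.mul_rpow hρ.le (by positivity)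
          _ = ρ ^ γ * q ^ k := by
              congr 1
              have e1 : (((2:ℝ) ^ (k:ℝ))⁻¹) ^ γ = (2:ℝ) ^ (-(k:ℝ) * γ) := by
                rw [← Real.rpow_neg (by norm_num : (0:ℝ) ≤ 2) (k:ℝ),
                  ← Real.rpow_mul (by norm_num : (0:ℝ) ≤ 2)]
              have e2 : q ^ k = (2:ℝ) ^ (-γ * (k:ℝ)) := by
                rw [hqdef, ← Real.rpow_natCast ((2:ℝ) ^ (-γ)) k,
                  ← Real.rpow_mul (by norm_num : (0:ℝ) ≤ 2)]
              rw [e1, e2]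
              congr 1
              ring
      calc u ^ (γ - 2) * (2 * u) ^ 2 * Real.pi
          = (u ^ (γ - 2) * u ^ (2:ℕ)) * (4 * Real.pi) := by ring
        _ = u ^ γ * (4 * Real.pi) := by rw [h2]
        _ ≤ (ρ ^ γ * q ^ k) * (4 * Real.pi) := by
            apply mul_le_mul_of_nonneg_right huγ (by positivity)
        _ = 4 * Real.pi * ρ ^ γ * q ^ k := by ring
    calc ∫⁻ y in A k, ENNReal.ofReal (‖y‖ ^ (γ - 2))
        ≤ ENNReal.ofReal (u ^ (γ - 2) * (ρ * ((2:ℝ) ^ (k:ℝ))⁻¹) ^ 2 * Real.pi) := by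
          refine piece _ (annulus_measurable _ _) _ _ (by positivity)
            (Real.rpow_nonneg hu0.le _) ?_ _ ?_
          · intro y hy
            rw [mem_closedBall_zero_iff]
            exact hy.2
          · intro y hy
            exact Real.rpow_le_rpow_of_nonpos hu0 hy.1 (by linarith)
      _ ≤ ENNReal.ofReal (4 * Real.pi * ρ ^ γ * q ^ k) := ENNReal.ofReal_le_ofReal hcRπ
      _ = ENNReal.ofReal (4 * Real.pi * ρ ^ γ) * (ENNReal.ofReal q) ^ k := by
          rw [← ENNReal.ofReal_pow hq0.le, ← ENNReal.ofReal_mul (by positivity)]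
  calc ∫⁻ y in closedBall (0:E2) ρ, ENNReal.ofReal (‖y‖ ^ (γ - 2))
      ≤ ∫⁻ y in {(0:E2)} ∪ ⋃ k, A k, ENNReal.ofReal (‖y‖ ^ (γ - 2)) :=
        lintegral_mono_set hsub
    _ ≤ (∫⁻ y in {(0:E2)}, ENNReal.ofReal (‖y‖ ^ (γ - 2)))
          + ∫⁻ y in ⋃ k, A k, ENNReal.ofReal (‖y‖ ^ (γ - 2)) := lintegral_union_le _ _ _
    _ = ∫⁻ y in ⋃ k, A k, ENNReal.ofReal (‖y‖ ^ (γ - 2)) := by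
        rw [Measure.restrict_eq_zero.mpr (measure_singleton _), lintegral_zero_measure,
          zero_add]
    _ ≤ ∑' k, ∫⁻ y in A k, ENNReal.ofReal (‖y‖ ^ (γ - 2)) := lintegral_iUnion_le _ _
    _ ≤ ∑' k, ENNReal.ofReal (4 * Real.pi * ρ ^ γ) * (ENNReal.ofReal q) ^ k :=
        ENNReal.tsum_le_tsum hterm
    _ = ENNReal.ofReal (4 * Real.pi * ρ ^ γ) * (1 - ENNReal.ofReal q)⁻¹ := by
        rw [ENNReal.tsum_mul_left, ENNReal.tsum_geometric]
    _ = ENNReal.ofReal (4 * Real.pi * ρ ^ γ * (1 - q)⁻¹) := by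
        have h1q : (1:ℝ≥0∞) - ENNReal.ofReal q = ENNReal.ofReal (1 - q) := by
          rw [ENNReal.ofReal_sub 1 hq0.le, ENNReal.ofReal_one]
        rw [h1q, ← ENNReal.ofReal_inv_of_pos (by linarith), ← ENNReal.ofReal_mul (by positivity)]

end BKMAux

open BKMAux Metric

set_option maxHeartbeats 1000000 in
/-- **Lemma 4.3 (Le46): Beale–Kato–Majda-type logarithmic estimate for the singular part
of the Biot–Savart kernel.** For every `γ ∈ (0,1]` there is `C = C(γ) > 0` such that for
every bounded measurable `w : ℝ² → ℝ` with `|w| ≤ Mw` and Hölder bound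
`|w(x) − w(y)| ≤ Lγ |x−y|^γ`, setting `δ := (1 + Lγ)⁻¹`, one has for every `x`:
`‖∫_{|y|≤δ} ∇H(y)(w(x−y) − w(x)) dy + ∫_{δ<|y|≤π} ∇H(y) w(x−y) dy‖
  ≤ C (1 + Mw (1 + log(1 + Lγ)))`. -/
theorem biot_savart_log_estimate (γ : ℝ) (hγ : γ ∈ Set.Ioc (0:ℝ) 1) :
    ∃ C > 0, ∀ (w : EuclideanSpace ℝ (Fin 2) → ℝ) (Mw Lγ : ℝ),
      Measurable w → (∀ x, |w x| ≤ Mw) → 0 ≤ Lγ →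
      (∀ x y, |w x - w y| ≤ Lγ * ‖x - y‖ ^ γ) →
      ∀ x : EuclideanSpace ℝ (Fin 2),
        ‖(∫ y in Metric.closedBall (0 : EuclideanSpace ℝ (Fin 2)) (1 + Lγ)⁻¹,
              (w (x - y) - w x) • fderiv ℝ biotSavartH y) +
            ∫ y in {y : EuclideanSpace ℝ (Fin 2) | (1 + Lγ)⁻¹ < ‖y‖ ∧ ‖y‖ ≤ Real.pi},
              w (x - y) • fderiv ℝ biotSavartH y‖
          ≤ C * (1 + Mw * (1 + Real.log (1 + Lγ))) := by
  obtain ⟨hγ0, hγ1⟩ := hγ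
  have hπ : (0:ℝ) < Real.pi := Real.pi_pos
  set K : ℝ := (1 - (2:ℝ) ^ (-γ))⁻¹ with hKdef
  have hq1 : (2:ℝ) ^ (-γ) < 1 := Real.rpow_lt_one_of_one_lt_of_neg one_lt_two (by linarith)
  have hK0 : 0 < K := inv_pos.mpr (by linarith)
  refine ⟨4 * Real.pi * K + 48 * Real.pi / γ,
    add_pos (by positivity) (by positivity), ?_⟩
  intro w Mw Lγ hwMeas hwM hL0 hwHolder x
  have hMw : 0 ≤ Mw := le_trans (abs_nonneg _) (hwM 0)
  have h1L : (0:ℝ) < 1 + Lγ := by linarith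
  have h1L1 : (1:ℝ) ≤ 1 + Lγ := by linarith
  set δ : ℝ := (1 + Lγ)⁻¹ with hδdef
  set ρ : ℝ := (1 + Lγ) ^ (-(1/γ)) with hρdef
  have hδ0 : 0 < δ := by positivity
  have hρ0 : 0 < ρ := Real.rpow_pos_of_pos h1L _
  have hδr : δ = (1 + Lγ) ^ (-1:ℝ) := by rw [hδdef, Real.rpow_neg_one]
  have hρδ : ρ ≤ δ := by
    rw [hδr, hρdef]
    apply Real.rpow_le_rpow_of_exponent_le h1L1
    have h1γ : 1 ≤ 1/γ := by rw [le_div_iff₀ hγ0]; linarith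
    linarith
  have hδ1 : δ ≤ 1 := by rw [hδdef]; exact inv_le_one_of_one_le₀ h1L1
  have hδπ : δ ≤ Real.pi := by linarith [Real.pi_gt_three]
  set Λ : ℝ := Real.log (1 + Lγ) with hΛdef
  have hΛ0 : 0 ≤ Λ := Real.log_nonneg h1L1
  set b₁ : ℝ := Real.logb 2 (δ / ρ) with hb1def
  set b₂ : ℝ := Real.logb 2 (Real.pi / δ) with hb2def
  have hb10 : 0 ≤ b₁ := Real.logb_nonneg one_lt_two ((one_le_div hρ0).mpr hρδ)
  have hb20 : 0 ≤ b₂ := Real.logb_nonneg one_lt_two ((one_le_div hδ0).mpr hδπ)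
  clear_value K δ ρ Λ b₁ b₂
  -- pointwise bound on the small ball
  have hptball : ∀ y ∈ closedBall (0:E2) ρ,
      ENNReal.ofReal ‖(w (x - y) - w x) • fderiv ℝ biotSavartH y‖
        ≤ ENNReal.ofReal (Lγ * ‖y‖ ^ (γ - 2)) := by
    intro y _
    apply ENNReal.ofReal_le_ofReal
    by_cases h0 : y = 0
    · subst h0
      rw [sub_zero, sub_self, zero_smul ℝ (fderiv ℝ biotSavartH 0), norm_zero, norm_zero,
        Real.zero_rpow (by linarith : γ - 2 ≠ 0), mul_zero]
    · have hN : 0 < ‖y‖ := norm_pos_iff.mpr h0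
      calc ‖(w (x - y) - w x) • fderiv ℝ biotSavartH y‖
          ≤ ‖w (x - y) - w x‖ * ‖fderiv ℝ biotSavartH y‖ := norm_smul_le (w (x - y) - w x) (fderiv ℝ biotSavartH y)
        _ ≤ (Lγ * ‖y‖ ^ γ) * (‖y‖ ^ 2)⁻¹ := by
            apply mul_le_mul ?_ (norm_fderiv_biotSavartH y h0) (norm_nonneg _) (by positivity)
            rw [Real.norm_eq_abs]
            have h := hwHolder (x - y) x
            rwa [sub_sub_cancel_left, norm_neg] at h
        _ = Lγ * ‖y‖ ^ (γ - 2) := by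
            rw [Real.rpow_sub hN, div_eq_mul_inv,
              show ((2:ℝ)) = ((2:ℕ):ℝ) by norm_num, Real.rpow_natCast]
            ring
  -- pointwise bound on annuli
  have hptann : ∀ (gval : ℝ) (hg : |gval| ≤ 2 * Mw) (y : E2), y ≠ 0 →
      ‖gval • fderiv ℝ biotSavartH y‖ ≤ 2 * Mw * (‖y‖ ^ 2)⁻¹ := by
    intro gval hg y h0
    calc ‖gval • fderiv ℝ biotSavartH y‖
        ≤ ‖gval‖ * ‖fderiv ℝ biotSavartH y‖ := norm_smul_le gval (fderiv ℝ biotSavartH y)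
      _ ≤ (2 * Mw) * (‖y‖ ^ 2)⁻¹ := by
          apply mul_le_mul ?_ (norm_fderiv_biotSavartH y h0) (norm_nonneg _) (by positivity)
          rwa [Real.norm_eq_abs]
  -- bound for the first integral
  have hI1 : ‖∫ y in closedBall (0:E2) δ, (w (x - y) - w x) • fderiv ℝ biotSavartH y‖
      ≤ 4 * Real.pi * K + 2 * Mw * (4 * Real.pi * (b₁ + 1)) := by
    refine le_trans (norm_integral_le_lintegral_norm _) ?_
    apply ENNReal.toReal_le_of_le_ofReal
      (by positivity)
    have hsplit : closedBall (0:E2) δ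
        ⊆ closedBall (0:E2) ρ ∪ {y : E2 | ρ < ‖y‖ ∧ ‖y‖ ≤ δ} := by
      intro y hy
      rw [mem_closedBall_zero_iff] at hy
      by_cases hc : ‖y‖ ≤ ρ
      · exact Or.inl (mem_closedBall_zero_iff.mpr hc)
      · exact Or.inr ⟨lt_of_not_ge hc, hy⟩
    have hpart1 : ∫⁻ y in closedBall (0:E2) ρ,
        ENNReal.ofReal ‖(w (x - y) - w x) • fderiv ℝ biotSavartH y‖
          ≤ ENNReal.ofReal (4 * Real.pi * K) := by
      have hLρ : Lγ * ρ ^ γ ≤ 1 := by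
        have hexp : ρ ^ γ = (1 + Lγ)⁻¹ := by
          rw [hρdef, ← Real.rpow_mul h1L.le]
          rw [show -(1/γ) * γ = -1 by field_simp]
          exact Real.rpow_neg_one _
        rw [hexp, ← div_eq_mul_inv, div_le_one h1L]
        linarith
      calc ∫⁻ y in closedBall (0:E2) ρ,
          ENNReal.ofReal ‖(w (x - y) - w x) • fderiv ℝ biotSavartH y‖
          ≤ ∫⁻ y in closedBall (0:E2) ρ, ENNReal.ofReal (Lγ * ‖y‖ ^ (γ - 2)) :=
            setLIntegral_mono' measurableSet_closedBall hptball
        _ = ENNReal.ofReal Lγ * ∫⁻ y in closedBall (0:E2) ρ,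
              ENNReal.ofReal (‖y‖ ^ (γ - 2)) := by
            simp_rw [ENNReal.ofReal_mul hL0]
            rw [lintegral_const_mul' _ _ ENNReal.ofReal_ne_top]
        _ ≤ ENNReal.ofReal Lγ
              * ENNReal.ofReal (4 * Real.pi * ρ ^ γ * (1 - (2:ℝ) ^ (-γ))⁻¹) := by
            gcongr
            exact ball_lintegral γ hγ0 (by linarith) ρ hρ0
        _ = ENNReal.ofReal (Lγ * (4 * Real.pi * ρ ^ γ * K)) := by
            rw [← ENNReal.ofReal_mul hL0, hKdef]
        _ ≤ ENNReal.ofReal (4 * Real.pi * K) := by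
            apply ENNReal.ofReal_le_ofReal
            calc Lγ * (4 * Real.pi * ρ ^ γ * K) = (4 * Real.pi * K) * (Lγ * ρ ^ γ) := by ring
              _ ≤ (4 * Real.pi * K) * 1 :=
                mul_le_mul_of_nonneg_left hLρ (by positivity)
              _ = 4 * Real.pi * K := mul_one _
    have hpart2 : ∫⁻ y in {y : E2 | ρ < ‖y‖ ∧ ‖y‖ ≤ δ},
        ENNReal.ofReal ‖(w (x - y) - w x) • fderiv ℝ biotSavartH y‖
          ≤ ENNReal.ofReal (2 * Mw * (4 * Real.pi * (b₁ + 1))) := by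
      calc ∫⁻ y in {y : E2 | ρ < ‖y‖ ∧ ‖y‖ ≤ δ},
          ENNReal.ofReal ‖(w (x - y) - w x) • fderiv ℝ biotSavartH y‖
          ≤ ∫⁻ y in {y : E2 | ρ < ‖y‖ ∧ ‖y‖ ≤ δ},
              ENNReal.ofReal (2 * Mw * (‖y‖ ^ 2)⁻¹) := by
            refine setLIntegral_mono' (annulus_measurable' _ _) ?_
            intro y hy
            apply ENNReal.ofReal_le_ofReal
            have h0 : y ≠ 0 := by
              intro hcon
              rw [hcon] at hy
              simp at hy
              linarith [hy.1]
            refine hptann _ ?_ y h0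
            rw [sub_eq_add_neg]
            refine (abs_add_le _ _).trans ?_
            rw [abs_neg]
            linarith [hwM (x - y), hwM x]
        _ = ENNReal.ofReal (2 * Mw) * ∫⁻ y in {y : E2 | ρ < ‖y‖ ∧ ‖y‖ ≤ δ},
              ENNReal.ofReal ((‖y‖ ^ 2)⁻¹) := by
            simp_rw [ENNReal.ofReal_mul (by positivity : (0:ℝ) ≤ 2 * Mw)]
            rw [lintegral_const_mul' _ _ ENNReal.ofReal_ne_top]
        _ ≤ ENNReal.ofReal (2 * Mw) * ENNReal.ofReal (4 * Real.pi * (b₁ + 1)) := by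
            rw [hb1def]
            gcongr
            exact ann_lintegral ρ δ hρ0 hρδ
        _ = ENNReal.ofReal (2 * Mw * (4 * Real.pi * (b₁ + 1))) :=
            (ENNReal.ofReal_mul (by positivity)).symm
    calc ∫⁻ y in closedBall (0:E2) δ,
        ENNReal.ofReal ‖(w (x - y) - w x) • fderiv ℝ biotSavartH y‖
        ≤ ∫⁻ y in closedBall (0:E2) ρ ∪ {y : E2 | ρ < ‖y‖ ∧ ‖y‖ ≤ δ},
            ENNReal.ofReal ‖(w (x - y) - w x) • fderiv ℝ biotSavartH y‖ :=
          lintegral_mono_set hsplit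
      _ ≤ (∫⁻ y in closedBall (0:E2) ρ,
            ENNReal.ofReal ‖(w (x - y) - w x) • fderiv ℝ biotSavartH y‖)
          + ∫⁻ y in {y : E2 | ρ < ‖y‖ ∧ ‖y‖ ≤ δ},
            ENNReal.ofReal ‖(w (x - y) - w x) • fderiv ℝ biotSavartH y‖ :=
          lintegral_union_le _ _ _
      _ ≤ ENNReal.ofReal (4 * Real.pi * K)
          + ENNReal.ofReal (2 * Mw * (4 * Real.pi * (b₁ + 1))) := add_le_add hpart1 hpart2
      _ = ENNReal.ofReal (4 * Real.pi * K + 2 * Mw * (4 * Real.pi * (b₁ + 1))) :=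
          (ENNReal.ofReal_add (by positivity) (by positivity)).symm
  -- bound for the second integral
  have hI2 : ‖∫ y in {y : E2 | δ < ‖y‖ ∧ ‖y‖ ≤ Real.pi},
      w (x - y) • fderiv ℝ biotSavartH y‖ ≤ Mw * (4 * Real.pi * (b₂ + 1)) := by
    refine le_trans (norm_integral_le_lintegral_norm _) ?_
    apply ENNReal.toReal_le_of_le_ofReal (by positivity)
    calc ∫⁻ y in {y : E2 | δ < ‖y‖ ∧ ‖y‖ ≤ Real.pi},
        ENNReal.ofReal ‖w (x - y) • fderiv ℝ biotSavartH y‖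
        ≤ ∫⁻ y in {y : E2 | δ < ‖y‖ ∧ ‖y‖ ≤ Real.pi},
            ENNReal.ofReal (Mw * (‖y‖ ^ 2)⁻¹) := by
          refine setLIntegral_mono' (annulus_measurable' _ _) ?_
          intro y hy
          apply ENNReal.ofReal_le_ofReal
          have h0 : y ≠ 0 := by
            intro hcon
            rw [hcon] at hy
            simp at hy
            linarith [hy.1]
          calc ‖w (x - y) • fderiv ℝ biotSavartH y‖
              ≤ ‖w (x - y)‖ * ‖fderiv ℝ biotSavartH y‖ := norm_smul_le (w (x - y)) (fderiv ℝ biotSavartH y)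
            _ ≤ Mw * (‖y‖ ^ 2)⁻¹ := by
                apply mul_le_mul ?_ (norm_fderiv_biotSavartH y h0) (norm_nonneg _) hMw
                rw [Real.norm_eq_abs]
                exact hwM _
      _ = ENNReal.ofReal Mw * ∫⁻ y in {y : E2 | δ < ‖y‖ ∧ ‖y‖ ≤ Real.pi},
            ENNReal.ofReal ((‖y‖ ^ 2)⁻¹) := by
          simp_rw [ENNReal.ofReal_mul hMw]
          rw [lintegral_const_mul' _ _ ENNReal.ofReal_ne_top]
      _ ≤ ENNReal.ofReal Mw * ENNReal.ofReal (4 * Real.pi * (b₂ + 1)) := by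
          rw [hb2def]
          gcongr
          exact ann_lintegral δ Real.pi hδ0 hδπ
      _ = ENNReal.ofReal (Mw * (4 * Real.pi * (b₂ + 1))) :=
          (ENNReal.ofReal_mul hMw).symm
  -- combine
  refine le_trans (norm_add_le _ _) (le_trans (add_le_add hI1 hI2) ?_)
  -- final numeric bound
  have hlog2 : (1/2:ℝ) ≤ Real.log 2 := by
    have := Real.log_two_gt_d9
    linarith
  have hdr : δ / ρ = (1 + Lγ) ^ (1/γ - 1) := by
    rw [hδr, hρdef, ← Real.rpow_sub h1L]
    congr 1
    ring
  have hb1 : γ * b₁ ≤ 2 * Λ := by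
    have hlogdr : Real.log (δ / ρ) = (1/γ - 1) * Λ := by
      rw [hdr, Real.log_rpow h1L, hΛdef]
    have hb1eq : b₁ = ((1/γ - 1) * Λ) / Real.log 2 := by
      rw [hb1def, ← Real.log_div_log, hlogdr]
    have h1γ1 : (0:ℝ) ≤ (1 - γ) * Λ := by
      apply mul_nonneg (by linarith) hΛ0
    have hγb1 : γ * b₁ = ((1 - γ) * Λ) / Real.log 2 := by
      rw [hb1eq]
      field_simp
    rw [hγb1]
    rw [div_le_iff₀ (by linarith : (0:ℝ) < Real.log 2)]
    nlinarith [mul_le_mul_of_nonneg_left hlog2 hΛ0, mul_nonneg hγ0.le hΛ0]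
  have hb2 : b₂ ≤ 6 + 2 * Λ := by
    have hlogpd : Real.log (Real.pi / δ) = Real.log Real.pi + Λ := by
      rw [Real.log_div (by positivity) (by positivity), hδdef, Real.log_inv, hΛdef]
      ring
    have hlogpi : Real.log Real.pi ≤ 3 := by
      have h1 := Real.log_le_sub_one_of_pos hπ
      have h2 : Real.pi < 4 := by linarith [Real.pi_lt_d2]
      linarith
    have hb2eq : b₂ = (Real.log Real.pi + Λ) / Real.log 2 := by
      rw [hb2def, ← Real.log_div_log, hlogpd]
    rw [hb2eq, div_le_iff₀ (by linarith : (0:ℝ) < Real.log 2)]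
    nlinarith [mul_le_mul_of_nonneg_left hlog2 (show (0:ℝ) ≤ 6 + 2*Λ by linarith), hlogpi]
  -- multiply through by γ
  have hfinal : γ * (4 * Real.pi * K + 2 * Mw * (4 * Real.pi * (b₁ + 1))
      + Mw * (4 * Real.pi * (b₂ + 1)))
      ≤ γ * ((4 * Real.pi * K + 48 * Real.pi / γ) * (1 + Mw * (1 + Λ))) := by
    have hγC : γ * ((4 * Real.pi * K + 48 * Real.pi / γ) * (1 + Mw * (1 + Λ)))
        = (4 * Real.pi * K * γ + 48 * Real.pi) * (1 + Mw * (1 + Λ)) := by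
      field_simp
      try ring
    rw [hγC]
    have h1 : 8 * Real.pi * (Mw * (γ * b₁)) ≤ 8 * Real.pi * (Mw * (2 * Λ)) :=
      mul_le_mul_of_nonneg_left (mul_le_mul_of_nonneg_left hb1 hMw) (by positivity)
    have h2 : 4 * Real.pi * (γ * (Mw * b₂)) ≤ 4 * Real.pi * (Mw * (6 + 2 * Λ)) := by
      have ha1 : γ * (Mw * b₂) ≤ Mw * b₂ :=
        mul_le_of_le_one_left (mul_nonneg hMw hb20) hγ1
      have ha2 : Mw * b₂ ≤ Mw * (6 + 2 * Λ) := mul_le_mul_of_nonneg_left hb2 hMw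
      exact mul_le_mul_of_nonneg_left (ha1.trans ha2) (by positivity)
    have h3 : γ * Mw ≤ Mw := mul_le_of_le_one_left hMw hγ1
    have h4 : 0 ≤ Real.pi * Mw := mul_nonneg hπ.le hMw
    have h5 : 0 ≤ Real.pi * (Mw * Λ) := mul_nonneg hπ.le (mul_nonneg hMw hΛ0)
    have h6 : 0 ≤ 4 * Real.pi * K * γ * (Mw * (1 + Λ)) :=
      mul_nonneg (mul_nonneg (mul_nonneg (by positivity) hK0.le) hγ0.le)
        (mul_nonneg hMw (by linarith))
    have h3' : 12 * Real.pi * (γ * Mw) ≤ 12 * Real.pi * Mw :=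
      mul_le_mul_of_nonneg_left h3 (by positivity)
    nlinarith [h1, h2, h3', h4, h5, h6, hπ]
  exact le_of_mul_le_mul_left hfinal hγ0
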